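/- Let $\beta_m, \beta_n, r_0, r_1 > 0$ and let $\tau_0, \tau_1$ be independent exponential random variables with rates $r_0, r_1$. Suppose real random variables $(Z_m, Z_n)$, independent of $(\tau_0,\tau_1)$, satisfy the distributional fixed-point equation $(Z_m, Z_n) =_d \big(e^{-\beta_m\tau_0}(e^{-\beta_m\tau_1}Z_m - c_m) + c_m,\ e^{-\beta_n\tau_0}(e^{-\beta_n\tau_1}Z_n - c_n) + c_n\big)$ and have finite second moments. Then $\mathbb{E}[Z_m Z_n] = \frac{(\beta_m + \beta_n + r_1)\big((\beta_m+\beta_n)(\beta_m+r_1)(\beta_n+r_1) + (2\beta_m\beta_n + (\beta_m+\beta_n)r_1)r_0\big)}{(\beta_m+\beta_n)(\beta_m + r_1 + r_0)(\beta_n + r_1 + r_0)(\beta_m + \beta_n + r_1 + r_0)}\, c_m c_n$, where additionally the marginal fixed points give $\mathbb{E} Z_j = \frac{(r_1+\beta_j)}{(r_0+r_1+\beta_j)} c_j$. -/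

import Mathlib

open MeasureTheory ProbabilityTheory Real Set

lemma expMeasure_eq' (r : ℝ) :
    expMeasure r = MeasureTheory.volume.withDensity
      (fun x => ((exponentialPDFReal r x).toNNReal : ENNReal)) := rfl

lemma integral_expMeasure' {r : ℝ} (hr : 0 < r) (g : ℝ → ℝ) :
    ∫ x, g x ∂(expMeasure r) = ∫ x, exponentialPDFReal r x * g x := by
  rw [expMeasure_eq',
    integral_withDensity_eq_integral_smul ((measurable_exponentialPDFReal r).real_toNNReal) g]
  refine integral_congr_ae (Filter.Eventually.of_forall fun x => ?_)
  simp only [NNReal.smul_def, smul_eq_mul, Real.coe_toNNReal _ (exponentialPDFReal_nonneg hr x)]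

lemma integral_exponentialPDFReal' {r : ℝ} (hr : 0 < r) :
    ∫ x, exponentialPDFReal r x = 1 := by
  have := isProbabilityMeasure_expMeasure hr
  have h := integral_expMeasure' hr (fun _ => (1:ℝ))
  simpa using h.symm

lemma exponentialPDFReal_eq' (r x : ℝ) :
    exponentialPDFReal r x = if 0 ≤ x then r * exp (-(r * x)) else 0 := by
  rw [exponentialPDFReal, gammaPDFReal]
  simp only [rpow_one, Real.Gamma_one, div_one, sub_self, rpow_zero, mul_one]

lemma integral_exp_neg_expMeasure {r l : ℝ} (hr : 0 < r) (hl : 0 ≤ l) :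
    ∫ x, exp (-l * x) ∂(expMeasure r) = r / (r + l) := by
  have hrl : 0 < r + l := by linarith
  rw [integral_expMeasure' hr]
  have hpt : ∀ x, exponentialPDFReal r x * exp (-l * x)
      = (r / (r + l)) * exponentialPDFReal (r + l) x := by
    intro x
    rw [exponentialPDFReal_eq', exponentialPDFReal_eq']
    split_ifs with h
    · rw [mul_assoc, ← Real.exp_add, show (-(r*x) + -l*x) = -((r+l)*x) by ring]
      field_simp
    · simp
  simp_rw [hpt]
  rw [integral_const_mul, integral_exponentialPDFReal' hrl, mul_one]
set_option maxHeartbeats 3200000 in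
theorem stationary_fourier_covariance
    {Ω : Type*} [MeasurableSpace Ω] (P : Measure Ω) [IsProbabilityMeasure P]
    (βm βn r0 r1 cm cn : ℝ)
    (hβm : 0 < βm) (hβn : 0 < βn) (hr0 : 0 < r0) (hr1 : 0 < r1)
    (τ0 τ1 Zm Zn : Ω → ℝ)
    (hτ0meas : Measurable τ0) (hτ1meas : Measurable τ1)
    (hZmmeas : Measurable Zm) (hZnmeas : Measurable Zn)
    (hτ0 : Measure.map τ0 P = expMeasure r0)
    (hτ1 : Measure.map τ1 P = expMeasure r1)
    (hττ : IndepFun τ0 τ1 P)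
    (hZτ : IndepFun (fun ω => (Zm ω, Zn ω)) (fun ω => (τ0 ω, τ1 ω)) P)
    (hZm2 : MemLp Zm 2 P) (hZn2 : MemLp Zn 2 P)
    (hfix : Measure.map (fun ω => (Zm ω, Zn ω)) P =
      Measure.map (fun ω =>
        (Real.exp (-βm * τ0 ω) * (Real.exp (-βm * τ1 ω) * Zm ω - cm) + cm,
         Real.exp (-βn * τ0 ω) * (Real.exp (-βn * τ1 ω) * Zn ω - cn) + cn)) P) :
    (∫ ω, Zm ω * Zn ω ∂P =
      (βm + βn + r1) *
        ((βm + βn) * (βm + r1) * (βn + r1) +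
          (2 * βm * βn + (βm + βn) * r1) * r0) /
      ((βm + βn) * (βm + r1 + r0) * (βn + r1 + r0) * (βm + βn + r1 + r0)) *
        (cm * cn)) ∧
    (∫ ω, Zm ω ∂P = (r1 + βm) / (r0 + r1 + βm) * cm) ∧
    (∫ ω, Zn ω ∂P = (r1 + βn) / (r0 + r1 + βn) * cn) := by
  have hZmeas : Measurable fun ω => (Zm ω, Zn ω) := hZmmeas.prodMk hZnmeas
  have hRmeas : Measurable fun ω =>
      (Real.exp (-βm * τ0 ω) * (Real.exp (-βm * τ1 ω) * Zm ω - cm) + cm,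
       Real.exp (-βn * τ0 ω) * (Real.exp (-βn * τ1 ω) * Zn ω - cn) + cn) := by
    exact (((Real.measurable_exp.comp (hτ0meas.const_mul (-βm))).mul
        (((Real.measurable_exp.comp (hτ1meas.const_mul (-βm))).mul hZmmeas).sub
          measurable_const)).add measurable_const).prodMk
      (((Real.measurable_exp.comp (hτ0meas.const_mul (-βn))).mul
        (((Real.measurable_exp.comp (hτ1meas.const_mul (-βn))).mul hZnmeas).sub
          measurable_const)).add measurable_const)
  -- exponential moments
  have hm0 : ∀ l : ℝ, 0 ≤ l → ∫ ω, Real.exp (-l * τ0 ω) ∂P = r0 / (r0 + l) := by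
    intro l hl
    rw [← integral_exp_neg_expMeasure hr0 hl, ← hτ0,
      integral_map hτ0meas.aemeasurable
        (show Measurable fun x : ℝ => Real.exp (-l * x) from
          Real.measurable_exp.comp (measurable_id.const_mul (-l))).aestronglyMeasurable]
  have hm1 : ∀ l : ℝ, 0 ≤ l → ∫ ω, Real.exp (-l * τ1 ω) ∂P = r1 / (r1 + l) := by
    intro l hl
    rw [← integral_exp_neg_expMeasure hr1 hl, ← hτ1,
      integral_map hτ1meas.aemeasurable
        (show Measurable fun x : ℝ => Real.exp (-l * x) from
          Real.measurable_exp.comp (measurable_id.const_mul (-l))).aestronglyMeasurable]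
  -- a.e. nonnegativity of exponential random variables
  have hnn : ∀ (τ : Ω → ℝ) (r : ℝ), Measurable τ → Measure.map τ P = expMeasure r →
      ∀ᵐ ω ∂P, 0 ≤ τ ω := by
    intro τ r hτm hτe
    have hIio : expMeasure r (Set.Iio 0) = 0 := by
      show (MeasureTheory.volume.withDensity (exponentialPDF r)) (Set.Iio 0) = 0
      rw [withDensity_apply _ measurableSet_Iio]
      exact lintegral_exponentialPDF_of_nonpos le_rfl
    have hP0 : P (τ ⁻¹' Set.Iio 0) = 0 := by
      rw [← Measure.map_apply hτm measurableSet_Iio, hτe, hIio]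
    rw [ae_iff]
    convert hP0 using 2
    ext ω
    simp [not_le]
  have hnn0 := hnn τ0 r0 hτ0meas hτ0
  have hnn1 := hnn τ1 r1 hτ1meas hτ1
  -- integrability of exponentials
  have hie : ∀ (τ : Ω → ℝ), Measurable τ → (∀ᵐ ω ∂P, 0 ≤ τ ω) → ∀ l : ℝ, 0 ≤ l →
      Integrable (fun ω => Real.exp (-l * τ ω)) P := by
    intro τ hτm hτnn l hl
    refine Integrable.mono' (integrable_const 1)
      (Real.measurable_exp.comp (hτm.const_mul (-l))).aestronglyMeasurable ?_
    filter_upwards [hτnn] with ω hω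
    rw [Real.norm_eq_abs, abs_of_pos (Real.exp_pos _)]
    have : -l * τ ω ≤ 0 := by nlinarith
    calc Real.exp (-l * τ ω) ≤ Real.exp 0 := Real.exp_le_exp.mpr this
    _ = 1 := Real.exp_zero
  -- integrability of the Z variables
  have hiZm : Integrable Zm P := hZm2.integrable one_le_two
  have hiZn : Integrable Zn P := hZn2.integrable one_le_two
  have hiZmn : Integrable (fun ω => Zm ω * Zn ω) P := by
    have h : MemLp (Zm • Zn) 1 P := hZn2.smul hZm2 (hpqr := ⟨by rw [inv_one, ENNReal.inv_two_add_inv_two]⟩)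
    exact memLp_one_iff_integrable.mp h
  -- key factorization lemma
  have key : ∀ a b : ℝ, 0 < a → 0 ≤ b → ∀ φ : ℝ × ℝ → ℝ, Measurable φ →
      Integrable (fun ω => φ (Zm ω, Zn ω)) P →
      Integrable (fun ω => Real.exp (-a * τ0 ω) * Real.exp (-b * τ1 ω) * φ (Zm ω, Zn ω)) P ∧
      ∫ ω, Real.exp (-a * τ0 ω) * Real.exp (-b * τ1 ω) * φ (Zm ω, Zn ω) ∂P
        = r0 / (r0 + a) * (r1 / (r1 + b)) * ∫ ω, φ (Zm ω, Zn ω) ∂P := by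
    intro a b ha hb φ hφ hφint
    have hiττ : IndepFun (fun ω => Real.exp (-a * τ0 ω)) (fun ω => Real.exp (-b * τ1 ω)) P :=
      hττ.comp (Real.measurable_exp.comp (measurable_id.const_mul (-a)))
        (Real.measurable_exp.comp (measurable_id.const_mul (-b)))
    have hint0 := hie τ0 hτ0meas hnn0 a ha.le
    have hint1 := hie τ1 hτ1meas hnn1 b hb
    have hgint : Integrable (fun ω => Real.exp (-a * τ0 ω) * Real.exp (-b * τ1 ω)) P :=
      hiττ.integrable_mul hint0 hint1
    have hgval : ∫ ω, Real.exp (-a * τ0 ω) * Real.exp (-b * τ1 ω) ∂P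
        = r0 / (r0 + a) * (r1 / (r1 + b)) := by
      have h2 : ∫ ω, Real.exp (-a * τ0 ω) * Real.exp (-b * τ1 ω) ∂P
          = (∫ ω, Real.exp (-a * τ0 ω) ∂P) * ∫ ω, Real.exp (-b * τ1 ω) ∂P :=
        hiττ.integral_fun_mul_eq_mul_integral hint0.aestronglyMeasurable hint1.aestronglyMeasurable
      rw [h2, hm0 a ha.le, hm1 b hb]
    have hiZτ : IndepFun (fun ω => Real.exp (-a * τ0 ω) * Real.exp (-b * τ1 ω))
        (fun ω => φ (Zm ω, Zn ω)) P := by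
      have h := hZτ.comp hφ
        ((Real.measurable_exp.comp (measurable_fst.const_mul (-a))).mul
          (Real.measurable_exp.comp (measurable_snd.const_mul (-b))))
      exact h.symm
    constructor
    · exact hiZτ.integrable_mul hgint hφint
    · have h3 : ∫ ω, Real.exp (-a * τ0 ω) * Real.exp (-b * τ1 ω) * φ (Zm ω, Zn ω) ∂P
          = (∫ ω, Real.exp (-a * τ0 ω) * Real.exp (-b * τ1 ω) ∂P)
            * ∫ ω, φ (Zm ω, Zn ω) ∂P :=
        hiZτ.integral_fun_mul_eq_mul_integral hgint.aestronglyMeasurable hφint.aestronglyMeasurable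
      rw [h3, hgval]
  -- transfer via the fixed-point equation
  have htrans : ∀ f : ℝ × ℝ → ℝ, Measurable f →
      ∫ ω, f (Zm ω, Zn ω) ∂P = ∫ ω,
        f (Real.exp (-βm * τ0 ω) * (Real.exp (-βm * τ1 ω) * Zm ω - cm) + cm,
           Real.exp (-βn * τ0 ω) * (Real.exp (-βn * τ1 ω) * Zn ω - cn) + cn) ∂P := by
    intro f hf
    calc ∫ ω, f (Zm ω, Zn ω) ∂P
        = ∫ p, f p ∂(Measure.map (fun ω => (Zm ω, Zn ω)) P) :=
          (integral_map hZmeas.aemeasurable hf.aestronglyMeasurable).symm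
      _ = ∫ ω, f (Real.exp (-βm * τ0 ω) * (Real.exp (-βm * τ1 ω) * Zm ω - cm) + cm,
           Real.exp (-βn * τ0 ω) * (Real.exp (-βn * τ1 ω) * Zn ω - cn) + cn) ∂P := by
          rw [hfix]
          exact integral_map hRmeas.aemeasurable hf.aestronglyMeasurable
  -- specialized key instances
  have kmm := key βm βm hβm hβm.le (fun p => p.1) measurable_fst hiZm
  have knn := key βn βn hβn hβn.le (fun p => p.2) measurable_snd hiZn
  have ksm := key (βm + βn) βm (by linarith) hβm.le (fun p => p.1) measurable_fst hiZm
  have ksn := key (βm + βn) βn (by linarith) hβn.le (fun p => p.2) measurable_snd hiZn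
  have kss := key (βm + βn) (βm + βn) (by linarith) (by linarith)
    (fun p => p.1 * p.2) (measurable_fst.mul measurable_snd) hiZmn
  simp only at kmm knn ksm ksn kss
  -- integrability of pure τ0 exponentials
  have hg0m := hie τ0 hτ0meas hnn0 βm hβm.le
  have hg0n := hie τ0 hτ0meas hnn0 βn hβn.le
  have hg0s := hie τ0 hτ0meas hnn0 (βm + βn) (by linarith)
  -- the mean equations
  have hAeq : ∫ ω, Zm ω ∂P = r0 / (r0 + βm) * (r1 / (r1 + βm)) * (∫ ω, Zm ω ∂P)
      - cm * (r0 / (r0 + βm)) + cm := by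
    have e1 := htrans (fun p => p.1) measurable_fst
    simp only at e1
    refine e1.trans ?_
    have hpt : ∀ ω, Real.exp (-βm * τ0 ω) * (Real.exp (-βm * τ1 ω) * Zm ω - cm) + cm
        = Real.exp (-βm * τ0 ω) * Real.exp (-βm * τ1 ω) * Zm ω
          - cm * Real.exp (-βm * τ0 ω) + cm := by
      intro ω; ring
    rw [integral_congr_ae (Filter.Eventually.of_forall hpt)]
    have i1 : Integrable (fun ω => Real.exp (-βm * τ0 ω) * Real.exp (-βm * τ1 ω) * Zm ω) P :=
      kmm.1
    have i2 : Integrable (fun ω => cm * Real.exp (-βm * τ0 ω)) P := hg0m.const_mul cm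
    have i12 : Integrable (fun ω => Real.exp (-βm * τ0 ω) * Real.exp (-βm * τ1 ω) * Zm ω
        - cm * Real.exp (-βm * τ0 ω)) P := i1.sub i2
    rw [integral_add i12 (integrable_const cm), integral_sub i1 i2, integral_const_mul,
      integral_const, probReal_univ, smul_eq_mul, one_mul, kmm.2,
      hm0 βm hβm.le]
  have hBeq : ∫ ω, Zn ω ∂P = r0 / (r0 + βn) * (r1 / (r1 + βn)) * (∫ ω, Zn ω ∂P)
      - cn * (r0 / (r0 + βn)) + cn := by
    have e2 := htrans (fun p => p.2) measurable_snd
    simp only at e2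
    refine e2.trans ?_
    have hpt : ∀ ω, Real.exp (-βn * τ0 ω) * (Real.exp (-βn * τ1 ω) * Zn ω - cn) + cn
        = Real.exp (-βn * τ0 ω) * Real.exp (-βn * τ1 ω) * Zn ω
          - cn * Real.exp (-βn * τ0 ω) + cn := by
      intro ω; ring
    rw [integral_congr_ae (Filter.Eventually.of_forall hpt)]
    have i1 : Integrable (fun ω => Real.exp (-βn * τ0 ω) * Real.exp (-βn * τ1 ω) * Zn ω) P :=
      knn.1
    have i2 : Integrable (fun ω => cn * Real.exp (-βn * τ0 ω)) P := hg0n.const_mul cn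
    have i12 : Integrable (fun ω => Real.exp (-βn * τ0 ω) * Real.exp (-βn * τ1 ω) * Zn ω
        - cn * Real.exp (-βn * τ0 ω)) P := i1.sub i2
    rw [integral_add i12 (integrable_const cn), integral_sub i1 i2, integral_const_mul,
      integral_const, probReal_univ, smul_eq_mul, one_mul, knn.2,
      hm0 βn hβn.le]
  -- positivity facts
  have hd1 : (0:ℝ) < r0 + βm := by linarith
  have hd2 : (0:ℝ) < r1 + βm := by linarith
  have hd3 : (0:ℝ) < r0 + r1 + βm := by linarith
  have hd4 : (0:ℝ) < r0 + βn := by linarith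
  have hd5 : (0:ℝ) < r1 + βn := by linarith
  have hd6 : (0:ℝ) < r0 + r1 + βn := by linarith
  have hd7 : (0:ℝ) < r0 + (βm + βn) := by linarith
  have hd8 : (0:ℝ) < r1 + (βm + βn) := by linarith
  have hfrac : ∀ x : ℝ, 0 < x → r0 / (r0 + x) * (r1 / (r1 + x)) < 1 := by
    intro x hx
    have h1 : r0 / (r0 + x) < 1 := (div_lt_one (by linarith)).mpr (by linarith)
    have h2 : r1 / (r1 + x) < 1 := (div_lt_one (by linarith)).mpr (by linarith)
    have h1' : 0 ≤ r0 / (r0 + x) := by positivity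
    have h2' : 0 ≤ r1 / (r1 + x) := by positivity
    nlinarith
  -- solve the mean equations
  have hAval : ∫ ω, Zm ω ∂P = (r1 + βm) / (r0 + r1 + βm) * cm := by
    have hT : (r1 + βm) / (r0 + r1 + βm) * cm
        = r0 / (r0 + βm) * (r1 / (r1 + βm)) * ((r1 + βm) / (r0 + r1 + βm) * cm)
          - cm * (r0 / (r0 + βm)) + cm := by
      field_simp
      ring
    have hzero : (∫ ω, Zm ω ∂P - (r1 + βm) / (r0 + r1 + βm) * cm)
        * (1 - r0 / (r0 + βm) * (r1 / (r1 + βm))) = 0 := by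
      linear_combination hAeq - hT
    rcases mul_eq_zero.mp hzero with h | h
    · linarith [sub_eq_zero.mp h]
    · exfalso; have := hfrac βm hβm; linarith
  have hBval : ∫ ω, Zn ω ∂P = (r1 + βn) / (r0 + r1 + βn) * cn := by
    have hT : (r1 + βn) / (r0 + r1 + βn) * cn
        = r0 / (r0 + βn) * (r1 / (r1 + βn)) * ((r1 + βn) / (r0 + r1 + βn) * cn)
          - cn * (r0 / (r0 + βn)) + cn := by
      field_simp
      ring
    have hzero : (∫ ω, Zn ω ∂P - (r1 + βn) / (r0 + r1 + βn) * cn)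
        * (1 - r0 / (r0 + βn) * (r1 / (r1 + βn))) = 0 := by
      linear_combination hBeq - hT
    rcases mul_eq_zero.mp hzero with h | h
    · linarith [sub_eq_zero.mp h]
    · exfalso; have := hfrac βn hβn; linarith
  -- the second-moment equation
  have hCeq : ∫ ω, Zm ω * Zn ω ∂P =
      r0 / (r0 + (βm + βn)) * (r1 / (r1 + (βm + βn))) * (∫ ω, Zm ω * Zn ω ∂P)
      - cn * (r0 / (r0 + (βm + βn)) * (r1 / (r1 + βm)) * ∫ ω, Zm ω ∂P)
      - cm * (r0 / (r0 + (βm + βn)) * (r1 / (r1 + βn)) * ∫ ω, Zn ω ∂P)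
      + cm * cn * (r0 / (r0 + (βm + βn)))
      + cn * (r0 / (r0 + βm) * (r1 / (r1 + βm)) * ∫ ω, Zm ω ∂P)
      - cm * cn * (r0 / (r0 + βm))
      + cm * (r0 / (r0 + βn) * (r1 / (r1 + βn)) * ∫ ω, Zn ω ∂P)
      - cm * cn * (r0 / (r0 + βn))
      + cm * cn := by
    have e3 := htrans (fun p => p.1 * p.2) (measurable_fst.mul measurable_snd)
    simp only at e3
    refine e3.trans ?_
    have hpt : ∀ ω,
        (Real.exp (-βm * τ0 ω) * (Real.exp (-βm * τ1 ω) * Zm ω - cm) + cm)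
        * (Real.exp (-βn * τ0 ω) * (Real.exp (-βn * τ1 ω) * Zn ω - cn) + cn)
        = Real.exp (-(βm + βn) * τ0 ω) * Real.exp (-(βm + βn) * τ1 ω) * (Zm ω * Zn ω)
          - cn * (Real.exp (-(βm + βn) * τ0 ω) * Real.exp (-βm * τ1 ω) * Zm ω)
          - cm * (Real.exp (-(βm + βn) * τ0 ω) * Real.exp (-βn * τ1 ω) * Zn ω)
          + cm * cn * Real.exp (-(βm + βn) * τ0 ω)
          + cn * (Real.exp (-βm * τ0 ω) * Real.exp (-βm * τ1 ω) * Zm ω)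
          - cm * cn * Real.exp (-βm * τ0 ω)
          + cm * (Real.exp (-βn * τ0 ω) * Real.exp (-βn * τ1 ω) * Zn ω)
          - cm * cn * Real.exp (-βn * τ0 ω)
          + cm * cn := by
      intro ω
      have h0 : Real.exp (-(βm + βn) * τ0 ω)
          = Real.exp (-βm * τ0 ω) * Real.exp (-βn * τ0 ω) := by
        rw [← Real.exp_add]; ring_nf
      have h1 : Real.exp (-(βm + βn) * τ1 ω)
          = Real.exp (-βm * τ1 ω) * Real.exp (-βn * τ1 ω) := by
        rw [← Real.exp_add]; ring_nf
      rw [h0, h1]; ring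
    rw [integral_congr_ae (Filter.Eventually.of_forall hpt)]
    have J1 : Integrable (fun ω => Real.exp (-(βm + βn) * τ0 ω) * Real.exp (-(βm + βn) * τ1 ω) * (Zm ω * Zn ω)) P := kss.1
    have J2 : Integrable (fun ω => cn * (Real.exp (-(βm + βn) * τ0 ω) * Real.exp (-βm * τ1 ω) * Zm ω)) P := (ksm.1).const_mul cn
    have J3 : Integrable (fun ω => cm * (Real.exp (-(βm + βn) * τ0 ω) * Real.exp (-βn * τ1 ω) * Zn ω)) P := (ksn.1).const_mul cm
    have J4 : Integrable (fun ω => cm * cn * Real.exp (-(βm + βn) * τ0 ω)) P := hg0s.const_mul (cm * cn)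
    have J5 : Integrable (fun ω => cn * (Real.exp (-βm * τ0 ω) * Real.exp (-βm * τ1 ω) * Zm ω)) P := (kmm.1).const_mul cn
    have J6 : Integrable (fun ω => cm * cn * Real.exp (-βm * τ0 ω)) P := hg0m.const_mul (cm * cn)
    have J7 : Integrable (fun ω => cm * (Real.exp (-βn * τ0 ω) * Real.exp (-βn * τ1 ω) * Zn ω)) P := (knn.1).const_mul cm
    have J8 : Integrable (fun ω => cm * cn * Real.exp (-βn * τ0 ω)) P := hg0n.const_mul (cm * cn)
    have s1 : Integrable (fun ω => Real.exp (-(βm + βn) * τ0 ω) * Real.exp (-(βm + βn) * τ1 ω) * (Zm ω * Zn ω)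
        - cn * (Real.exp (-(βm + βn) * τ0 ω) * Real.exp (-βm * τ1 ω) * Zm ω)) P := J1.sub J2
    have s2 : Integrable (fun ω => Real.exp (-(βm + βn) * τ0 ω) * Real.exp (-(βm + βn) * τ1 ω) * (Zm ω * Zn ω)
        - cn * (Real.exp (-(βm + βn) * τ0 ω) * Real.exp (-βm * τ1 ω) * Zm ω)
        - cm * (Real.exp (-(βm + βn) * τ0 ω) * Real.exp (-βn * τ1 ω) * Zn ω)) P := s1.sub J3
    have s3 : Integrable (fun ω => Real.exp (-(βm + βn) * τ0 ω) * Real.exp (-(βm + βn) * τ1 ω) * (Zm ω * Zn ω)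
        - cn * (Real.exp (-(βm + βn) * τ0 ω) * Real.exp (-βm * τ1 ω) * Zm ω)
        - cm * (Real.exp (-(βm + βn) * τ0 ω) * Real.exp (-βn * τ1 ω) * Zn ω)
        + cm * cn * Real.exp (-(βm + βn) * τ0 ω)) P := s2.add J4
    have s4 : Integrable (fun ω => Real.exp (-(βm + βn) * τ0 ω) * Real.exp (-(βm + βn) * τ1 ω) * (Zm ω * Zn ω)
        - cn * (Real.exp (-(βm + βn) * τ0 ω) * Real.exp (-βm * τ1 ω) * Zm ω)
        - cm * (Real.exp (-(βm + βn) * τ0 ω) * Real.exp (-βn * τ1 ω) * Zn ω)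
        + cm * cn * Real.exp (-(βm + βn) * τ0 ω)
        + cn * (Real.exp (-βm * τ0 ω) * Real.exp (-βm * τ1 ω) * Zm ω)) P := s3.add J5
    have s5 : Integrable (fun ω => Real.exp (-(βm + βn) * τ0 ω) * Real.exp (-(βm + βn) * τ1 ω) * (Zm ω * Zn ω)
        - cn * (Real.exp (-(βm + βn) * τ0 ω) * Real.exp (-βm * τ1 ω) * Zm ω)
        - cm * (Real.exp (-(βm + βn) * τ0 ω) * Real.exp (-βn * τ1 ω) * Zn ω)
        + cm * cn * Real.exp (-(βm + βn) * τ0 ω)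
        + cn * (Real.exp (-βm * τ0 ω) * Real.exp (-βm * τ1 ω) * Zm ω)
        - cm * cn * Real.exp (-βm * τ0 ω)) P := s4.sub J6
    have s6 : Integrable (fun ω => Real.exp (-(βm + βn) * τ0 ω) * Real.exp (-(βm + βn) * τ1 ω) * (Zm ω * Zn ω)
        - cn * (Real.exp (-(βm + βn) * τ0 ω) * Real.exp (-βm * τ1 ω) * Zm ω)
        - cm * (Real.exp (-(βm + βn) * τ0 ω) * Real.exp (-βn * τ1 ω) * Zn ω)
        + cm * cn * Real.exp (-(βm + βn) * τ0 ω)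
        + cn * (Real.exp (-βm * τ0 ω) * Real.exp (-βm * τ1 ω) * Zm ω)
        - cm * cn * Real.exp (-βm * τ0 ω)
        + cm * (Real.exp (-βn * τ0 ω) * Real.exp (-βn * τ1 ω) * Zn ω)) P := s5.add J7
    have s7 : Integrable (fun ω => Real.exp (-(βm + βn) * τ0 ω) * Real.exp (-(βm + βn) * τ1 ω) * (Zm ω * Zn ω)
        - cn * (Real.exp (-(βm + βn) * τ0 ω) * Real.exp (-βm * τ1 ω) * Zm ω)
        - cm * (Real.exp (-(βm + βn) * τ0 ω) * Real.exp (-βn * τ1 ω) * Zn ω)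
        + cm * cn * Real.exp (-(βm + βn) * τ0 ω)
        + cn * (Real.exp (-βm * τ0 ω) * Real.exp (-βm * τ1 ω) * Zm ω)
        - cm * cn * Real.exp (-βm * τ0 ω)
        + cm * (Real.exp (-βn * τ0 ω) * Real.exp (-βn * τ1 ω) * Zn ω)
        - cm * cn * Real.exp (-βn * τ0 ω)) P := s6.sub J8
    rw [integral_add s7 (integrable_const (cm * cn)), integral_sub s6 J8,
      integral_add s5 J7, integral_sub s4 J6, integral_add s3 J5, integral_add s2 J4,
      integral_sub s1 J3, integral_sub J1 J2,
      integral_const_mul, integral_const_mul, integral_const_mul, integral_const_mul,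
      integral_const_mul, integral_const_mul, integral_const_mul,
      integral_const, probReal_univ, smul_eq_mul, one_mul,
      kss.2, ksm.2, ksn.2, kmm.2, knn.2,
      hm0 (βm + βn) (by linarith), hm0 βm hβm.le, hm0 βn hβn.le]
  -- substitute the means into the second-moment equation
  rw [hAval, hBval] at hCeq
  refine ⟨?_, hAval, hBval⟩
  -- the target value satisfies the same linear equation
  have hT : (βm + βn + r1) *
        ((βm + βn) * (βm + r1) * (βn + r1) + (2 * βm * βn + (βm + βn) * r1) * r0) /
      ((βm + βn) * (βm + r1 + r0) * (βn + r1 + r0) * (βm + βn + r1 + r0)) * (cm * cn)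
      = r0 / (r0 + (βm + βn)) * (r1 / (r1 + (βm + βn))) *
          ((βm + βn + r1) *
            ((βm + βn) * (βm + r1) * (βn + r1) + (2 * βm * βn + (βm + βn) * r1) * r0) /
          ((βm + βn) * (βm + r1 + r0) * (βn + r1 + r0) * (βm + βn + r1 + r0)) * (cm * cn))
      - cn * (r0 / (r0 + (βm + βn)) * (r1 / (r1 + βm)) * ((r1 + βm) / (r0 + r1 + βm) * cm))
      - cm * (r0 / (r0 + (βm + βn)) * (r1 / (r1 + βn)) * ((r1 + βn) / (r0 + r1 + βn) * cn))
      + cm * cn * (r0 / (r0 + (βm + βn)))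
      + cn * (r0 / (r0 + βm) * (r1 / (r1 + βm)) * ((r1 + βm) / (r0 + r1 + βm) * cm))
      - cm * cn * (r0 / (r0 + βm))
      + cm * (r0 / (r0 + βn) * (r1 / (r1 + βn)) * ((r1 + βn) / (r0 + r1 + βn) * cn))
      - cm * cn * (r0 / (r0 + βn))
      + cm * cn := by
    have hn1 : (βm + βn : ℝ) ≠ 0 := by positivity
    have hn2 : (βm + r1 + r0 : ℝ) ≠ 0 := by positivity
    have hn3 : (βn + r1 + r0 : ℝ) ≠ 0 := by positivity
    have hn4 : (βm + βn + r1 + r0 : ℝ) ≠ 0 := by positivity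
    have hn5 : (r0 + (βm + βn) : ℝ) ≠ 0 := ne_of_gt hd7
    have hn6 : (r1 + (βm + βn) : ℝ) ≠ 0 := ne_of_gt hd8
    have hn7 : (r1 + βm : ℝ) ≠ 0 := ne_of_gt hd2
    have hn8 : (r0 + r1 + βm : ℝ) ≠ 0 := ne_of_gt hd3
    have hn9 : (r1 + βn : ℝ) ≠ 0 := ne_of_gt hd5
    have hn10 : (r0 + r1 + βn : ℝ) ≠ 0 := ne_of_gt hd6
    have hn11 : (r0 + βm : ℝ) ≠ 0 := ne_of_gt hd1
    have hn12 : (r0 + βn : ℝ) ≠ 0 := ne_of_gt hd4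
    have u1 : (r1 + βm) / (r0 + r1 + βm) * cm
        = r0 / (r0 + βm) * (r1 / (r1 + βm)) * ((r1 + βm) / (r0 + r1 + βm) * cm)
          - cm * (r0 / (r0 + βm)) + cm := by
      field_simp
      ring
    have u2 : (r1 + βn) / (r0 + r1 + βn) * cn
        = r0 / (r0 + βn) * (r1 / (r1 + βn)) * ((r1 + βn) / (r0 + r1 + βn) * cn)
          - cn * (r0 / (r0 + βn)) + cn := by
      field_simp
      ring
    have u4 : r0 / (r0 + (βm + βn)) * (r1 / (r1 + βm)) * ((r1 + βm) / (r0 + r1 + βm) * cm)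
        = r0 / (r0 + (βm + βn)) * (r1 * cm / (r0 + r1 + βm)) := by
      field_simp
    have u5 : r0 / (r0 + (βm + βn)) * (r1 / (r1 + βn)) * ((r1 + βn) / (r0 + r1 + βn) * cn)
        = r0 / (r0 + (βm + βn)) * (r1 * cn / (r0 + r1 + βn)) := by
      field_simp
    have u3 : (βm + βn + r1) *
          ((βm + βn) * (βm + r1) * (βn + r1) + (2 * βm * βn + (βm + βn) * r1) * r0) /
        ((βm + βn) * (βm + r1 + r0) * (βn + r1 + r0) * (βm + βn + r1 + r0)) * (cm * cn)
        = r0 / (r0 + (βm + βn)) * (r1 / (r1 + (βm + βn))) *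
            ((βm + βn + r1) *
          ((βm + βn) * (βm + r1) * (βn + r1) + (2 * βm * βn + (βm + βn) * r1) * r0) /
        ((βm + βn) * (βm + r1 + r0) * (βn + r1 + r0) * (βm + βn + r1 + r0)) * (cm * cn))
          + cm * cn * (r0 / (r0 + (βm + βn)))
            * (1 - r1 / (r0 + r1 + βm) - r1 / (r0 + r1 + βn))
          + cn * ((r1 + βm) / (r0 + r1 + βm) * cm) + cm * ((r1 + βn) / (r0 + r1 + βn) * cn) - cm * cn := by
      field_simp
      ring
    linear_combination u3 + cn * u1 + cm * u2 + cn * u4 + cm * u5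
  have hzero : (∫ ω, Zm ω * Zn ω ∂P -
      (βm + βn + r1) *
        ((βm + βn) * (βm + r1) * (βn + r1) + (2 * βm * βn + (βm + βn) * r1) * r0) /
      ((βm + βn) * (βm + r1 + r0) * (βn + r1 + r0) * (βm + βn + r1 + r0)) * (cm * cn))
      * (1 - r0 / (r0 + (βm + βn)) * (r1 / (r1 + (βm + βn)))) = 0 := by
    linear_combination hCeq - hT
  rcases mul_eq_zero.mp hzero with h | h
  · linarith [sub_eq_zero.mp h]
  · exfalso; have := hfrac (βm + βn) (by linarith); linarith
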